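/- An observable (POVM) E on a finite-dimensional system with Hamiltonian H_S is thermal—i.e. it admits a thermodynamically free measurement scheme—if and only if every effect E_x commutes with H_S. -/

import Mathlib

open Matrix Kronecker ComplexOrder

/-- Completely positive map, via Kraus representation (equivalent in finite dimension). -/
def IsCP {d : Type*} [Fintype d] [DecidableEq d]
    (Φ : Matrix d d ℂ → Matrix d d ℂ) : Prop :=
  ∃ (m : ℕ) (K : Fin m → Matrix d d ℂ), ∀ A, Φ A = ∑ i, K i * A * (K i)ᴴ

/-- Trace-preserving map. -/
def IsTP {d : Type*} [Fintype d] [DecidableEq d]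
    (Φ : Matrix d d ℂ → Matrix d d ℂ) : Prop :=
  ∀ A, (Φ A).trace = A.trace

/-- Unital map. -/
def IsUnital {d : Type*} [Fintype d] [DecidableEq d]
    (Φ : Matrix d d ℂ → Matrix d d ℂ) : Prop :=
  Φ 1 = 1

/-- `Φd` is the Heisenberg dual of `Φ`, defined by trace duality. -/
def IsDual {d : Type*} [Fintype d] [DecidableEq d]
    (Φ Φd : Matrix d d ℂ → Matrix d d ℂ) : Prop :=
  ∀ A B, (A * Φ B).trace = (Φd A * B).trace

/-- Gibbs state `e^{-βH}/tr[e^{-βH}]`. -/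
noncomputable def gibbs {d : Type*} [Fintype d] [DecidableEq d]
    (H : Matrix d d ℂ) (β : ℝ) : Matrix d d ℂ :=
  ((NormedSpace.exp ((-β : ℂ) • H)).trace)⁻¹ • NormedSpace.exp ((-β : ℂ) • H)

/-! ### Auxiliary lemmas -/

private lemma trace_mul_std {n : Type*} [Fintype n] [DecidableEq n]
    (M : Matrix n n ℂ) (i j : n) :
    (M * Matrix.single j i (1:ℂ)).trace = M i j := by
  classical
  simp [Matrix.trace, Matrix.diag, Matrix.mul_apply, Matrix.single, Matrix.of_apply,
    ite_and, Finset.sum_ite_eq, Finset.sum_ite_eq']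

private lemma eq_zero_of_forall_trace {n : Type*} [Fintype n] [DecidableEq n]
    (M : Matrix n n ℂ) (h : ∀ σ, (M * σ).trace = 0) : M = 0 := by
  ext i j
  simpa [trace_mul_std] using h (Matrix.single j i 1)

private lemma kron_conjT {m n : Type*} [Fintype m] [Fintype n]
    (A : Matrix m m ℂ) (B : Matrix n n ℂ) : (A ⊗ₖ B)ᴴ = Aᴴ ⊗ₖ Bᴴ := by
  ext ⟨i,j⟩ ⟨k,l⟩
  simp [Matrix.conjTranspose_apply, Matrix.kroneckerMap_apply, star_mul']

private lemma sub_kron {m n : Type*} [Fintype m] [Fintype n]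
    (A B : Matrix m m ℂ) (C : Matrix n n ℂ) : (A - B) ⊗ₖ C = A ⊗ₖ C - B ⊗ₖ C := by
  ext ⟨i,j⟩ ⟨k,l⟩
  simp [Matrix.kroneckerMap_apply, sub_mul]

private lemma kron_mul {m n : Type*} [Fintype m] [Fintype n]
    (A B : Matrix m m ℂ) (C D : Matrix n n ℂ) :
    (A ⊗ₖ C) * (B ⊗ₖ D) = (A * B) ⊗ₖ (C * D) :=
  (Matrix.mul_kronecker_mul A B C D).symm

private lemma trace_mul_conjT {d : Type*} [Fintype d] (L : Matrix d d ℂ) :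
    (L * Lᴴ).trace = ((∑ j, ∑ k, Complex.normSq (L j k) : ℝ) : ℂ) := by
  push_cast
  simp [Matrix.trace, Matrix.diag, Matrix.mul_apply, Matrix.conjTranspose_apply,
    Complex.mul_conj]

private lemma eq_zero_of_trace_mul_conjT {d : Type*} [Fintype d] {L : Matrix d d ℂ}
    (h : (L * Lᴴ).trace = 0) : L = 0 := by
  rw [trace_mul_conjT, Complex.ofReal_eq_zero] at h
  have h1 := (Finset.sum_eq_zero_iff_of_nonneg
    (fun j _ => Finset.sum_nonneg fun k _ => Complex.normSq_nonneg _)).1 h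
  ext j k
  have h2 := (Finset.sum_eq_zero_iff_of_nonneg
    (fun k _ => Complex.normSq_nonneg _)).1 (h1 j (Finset.mem_univ _)) k (Finset.mem_univ _)
  simpa using Complex.normSq_eq_zero.mp h2

private lemma kraus_commute {d : Type*} [Fintype d] [DecidableEq d] {m : ℕ}
    (K : Fin m → Matrix d d ℂ) (H : Matrix d d ℂ) (hH : Hᴴ = H)
    (hu : ∑ i, K i * 1 * (K i)ᴴ = 1)
    (htp : (∑ i, K i * (H * H) * (K i)ᴴ).trace = (H * H).trace)
    (hfix : ∑ i, K i * H * (K i)ᴴ = H) :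
    ∀ i, K i * H = H * K i := by
  set L : Fin m → Matrix d d ℂ := fun i => K i * H - H * K i with hL
  have key : ∑ i, L i * (L i)ᴴ = (∑ i, K i * (H * H) * (K i)ᴴ) - H * H := by
    have hterm : ∀ i, L i * (L i)ᴴ =
        K i * (H * H) * (K i)ᴴ - (K i * H * (K i)ᴴ) * H - H * (K i * H * (K i)ᴴ)
          + H * (K i * 1 * (K i)ᴴ) * H := by
      intro i
      simp only [hL, Matrix.conjTranspose_sub, Matrix.conjTranspose_mul, hH]
      noncomm_ring
    calc ∑ i, L i * (L i)ᴴ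
        = (∑ i, K i * (H * H) * (K i)ᴴ) - (∑ i, K i * H * (K i)ᴴ) * H
            - H * (∑ i, K i * H * (K i)ᴴ) + H * (∑ i, K i * 1 * (K i)ᴴ) * H := by
          rw [Finset.sum_congr rfl (fun i _ => hterm i)]
          simp [Finset.sum_add_distrib, Finset.sum_sub_distrib, Finset.sum_mul,
            Finset.mul_sum, mul_assoc]
      _ = (∑ i, K i * (H * H) * (K i)ᴴ) - H * H := by
          rw [hfix, hu]
          noncomm_ring
  have h0 : ∑ i, (L i * (L i)ᴴ).trace = 0 := by
    rw [← Matrix.trace_sum, key, Matrix.trace_sub, htp, sub_self]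
  have h1 : ((∑ i, ∑ j, ∑ k, Complex.normSq (L i j k) : ℝ) : ℂ) = 0 := by
    rw [← h0, Complex.ofReal_sum]
    exact Finset.sum_congr rfl fun i _ => (trace_mul_conjT (L i)).symm
  have h2 : (∑ i, ∑ j, ∑ k, Complex.normSq (L i j k)) = 0 := Complex.ofReal_eq_zero.mp h1
  intro i
  have h3 := (Finset.sum_eq_zero_iff_of_nonneg (fun i _ => Finset.sum_nonneg fun j _ =>
    Finset.sum_nonneg fun k _ => Complex.normSq_nonneg _)).1 h2 i (Finset.mem_univ _)
  have h4 : L i = 0 := by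
    ext j k
    have h5 := (Finset.sum_eq_zero_iff_of_nonneg (fun j _ =>
      Finset.sum_nonneg fun k _ => Complex.normSq_nonneg _)).1 h3 j (Finset.mem_univ _)
    have h6 := (Finset.sum_eq_zero_iff_of_nonneg (fun k _ =>
      Complex.normSq_nonneg _)).1 h5 k (Finset.mem_univ _)
    simpa using Complex.normSq_eq_zero.mp h6
  rw [hL] at h4
  exact sub_eq_zero.mp (by simpa using h4)

private noncomputable def swapM (n : ℕ) : Matrix (Fin n × Fin n) (Fin n × Fin n) ℂ :=
  Matrix.of fun p q => if p.1 = q.2 ∧ p.2 = q.1 then 1 else 0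

private lemma swap_conjT (n : ℕ) : (swapM n)ᴴ = swapM n := by
  ext ⟨i,j⟩ ⟨k,l⟩
  simp only [swapM, Matrix.conjTranspose_apply, Matrix.of_apply]
  by_cases h1 : i = l <;> by_cases h2 : j = k <;> subst_eqs <;> simp_all [eq_comm]

private lemma swap_kron (n : ℕ) (A B : Matrix (Fin n) (Fin n) ℂ) :
    swapM n * (A ⊗ₖ B) * swapM n = B ⊗ₖ A := by
  ext ⟨i,j⟩ ⟨k,l⟩
  simp [swapM, Matrix.mul_apply, Fintype.sum_prod_type, Matrix.kroneckerMap_apply,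
    ite_and, Finset.sum_ite_eq, Finset.sum_ite_eq', mul_comm]

private lemma swap_swap (n : ℕ) : swapM n * swapM n = 1 := by
  have := swap_kron n 1 1
  rwa [Matrix.one_kronecker_one, mul_one] at this

private lemma trace_exp_ne_zero {n : ℕ} (hn : 0 < n) (M : Matrix (Fin n) (Fin n) ℂ)
    (hM : Mᴴ = M) : (NormedSpace.exp M).trace ≠ 0 := by
  set B := NormedSpace.exp ((1/2 : ℂ) • M) with hB
  have hBH : Bᴴ = B := by
    rw [hB, ← Matrix.exp_conjTranspose]
    congr 1
    rw [Matrix.conjTranspose_smul, hM]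
    norm_num
  have hexp : NormedSpace.exp M = B * B := by
    rw [hB, ← Matrix.exp_add_of_commute _ _ (Commute.refl _)]
    congr 1
    rw [← add_smul]; norm_num
  intro h
  have hB0 : B = 0 := by
    apply eq_zero_of_trace_mul_conjT
    rw [hBH, ← hexp, h]
  have h0 : NormedSpace.exp M = 0 := by rw [hexp, hB0, mul_zero]
  have hu : IsUnit (NormedSpace.exp M) := Matrix.isUnit_exp M
  haveI : Nonempty (Fin n) := ⟨⟨0, hn⟩⟩
  exact hu.ne_zero h0

private lemma smul_herm {n : ℕ} (H : Matrix (Fin n) (Fin n) ℂ) (hH : Hᴴ = H) (β : ℝ) :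
    ((-β : ℂ) • H)ᴴ = (-β : ℂ) • H := by
  rw [Matrix.conjTranspose_smul, hH]
  congr 1
  simp [Complex.ext_iff]

private lemma gibbs_trace_one {n : ℕ} (hn : 0 < n) (H : Matrix (Fin n) (Fin n) ℂ)
    (hH : Hᴴ = H) (β : ℝ) : (gibbs H β).trace = 1 := by
  have := trace_exp_ne_zero hn _ (smul_herm H hH β)
  rw [gibbs, Matrix.trace_smul, smul_eq_mul, inv_mul_cancel₀ this]

private lemma gibbs_comm {n : ℕ} (H : Matrix (Fin n) (Fin n) ℂ) (β : ℝ) :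
    H * gibbs H β = gibbs H β * H := by
  rw [gibbs, Matrix.mul_smul, Matrix.smul_mul]
  congr 1
  exact (((Commute.refl H).smul_right ((-β : ℂ))).exp_right).eq

/-- A POVM `E` on a finite-dimensional system with Hamiltonian `H_S` is
thermal, i.e. admits a thermodynamically free measurement scheme (a probe with Hamiltonian
`H_A` prepared in a Gibbs state, a bistochastic channel conserving the additive total
Hamiltonian, and a pointer POVM commuting with `H_A` reproducing the statistics of `E`),
if and only if every effect `E_x` commutes with `H_S`. -/
theorem observable_thermal_iff_commutes {ns N : ℕ} (hns : 0 < ns)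
    (HS : Matrix (Fin ns) (Fin ns) ℂ) (hHS : HS.IsHermitian)
    (Eff : Fin N → Matrix (Fin ns) (Fin ns) ℂ)
    (hpos : ∀ x, (Eff x).PosSemidef)
    (hsum : ∑ x, Eff x = 1) :
    (∃ (na : ℕ) (HA : Matrix (Fin na) (Fin na) ℂ) (_ : HA.IsHermitian) (β : ℝ) (_ : 0 < β)
      (E Ed : Matrix (Fin ns × Fin na) (Fin ns × Fin na) ℂ →
              Matrix (Fin ns × Fin na) (Fin ns × Fin na) ℂ)
      (Z : Fin N → Matrix (Fin na) (Fin na) ℂ),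
        IsCP E ∧ IsTP E ∧ IsUnital E ∧ IsCP Ed ∧ IsTP Ed ∧ IsUnital Ed ∧ IsDual E Ed ∧
        Ed (HS ⊗ₖ 1 + 1 ⊗ₖ HA) = HS ⊗ₖ 1 + 1 ⊗ₖ HA ∧
        (∀ x, (Z x).PosSemidef) ∧ (∑ x, Z x = 1) ∧ (∀ x, Z x * HA = HA * Z x) ∧
        (∀ (ρ : Matrix (Fin ns) (Fin ns) ℂ) (x : Fin N),
          (Eff x * ρ).trace = ((1 ⊗ₖ Z x) * E (ρ ⊗ₖ gibbs HA β)).trace))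
    ↔ (∀ x, Eff x * HS = HS * Eff x) := by
  constructor
  · rintro ⟨na, HA, hHA, β, hβ, E, Ed, Z, hECP, hETP, hEU, hEdCP, hEdTP, hEdU, hdual,
      hcons, hZpos, hZsum, hZHA, hstats⟩ x
    set Ht : Matrix (Fin ns × Fin na) (Fin ns × Fin na) ℂ :=
      HS ⊗ₖ (1 : Matrix (Fin na) (Fin na) ℂ) + (1 : Matrix (Fin ns) (Fin ns) ℂ) ⊗ₖ HA
      with hHt
    have hHtH : Htᴴ = Ht := by
      rw [hHt]
      simp [Matrix.conjTranspose_add, kron_conjT, Matrix.conjTranspose_one, hHS.eq, hHA.eq]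
    obtain ⟨m, K, hK⟩ := hEdCP
    have hu : ∑ i, K i * 1 * (K i)ᴴ = 1 := by rw [← hK]; exact hEdU
    have htp : (∑ i, K i * (Ht * Ht) * (K i)ᴴ).trace = (Ht * Ht).trace := by
      rw [← hK]; exact hEdTP _
    have hfix : ∑ i, K i * Ht * (K i)ᴴ = Ht := by rw [← hK]; exact hcons
    have hcomm := kraus_commute K Ht hHtH hu htp hfix
    have hcommH : ∀ i, (K i)ᴴ * Ht = Ht * (K i)ᴴ := by
      intro i
      have h := congrArg Matrix.conjTranspose (hcomm i)
      rw [Matrix.conjTranspose_mul, Matrix.conjTranspose_mul, hHtH] at h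
      exact h.symm
    have hZH : ((1 : Matrix (Fin ns) (Fin ns) ℂ) ⊗ₖ Z x) * Ht
        = Ht * ((1 : Matrix (Fin ns) (Fin ns) ℂ) ⊗ₖ Z x) := by
      rw [hHt, Matrix.mul_add, Matrix.add_mul, kron_mul, kron_mul, kron_mul, kron_mul]
      simp only [one_mul, mul_one]
      rw [hZHA x]
    have hFH : Ed ((1 : Matrix (Fin ns) (Fin ns) ℂ) ⊗ₖ Z x) * Ht
        = Ht * Ed ((1 : Matrix (Fin ns) (Fin ns) ℂ) ⊗ₖ Z x) := by
      rw [hK, Finset.sum_mul, Finset.mul_sum]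
      refine Finset.sum_congr rfl fun i _ => ?_
      have c1 : Commute (K i) Ht := hcomm i
      have c2 : Commute ((K i)ᴴ) Ht := hcommH i
      have c3 : Commute ((1 : Matrix (Fin ns) (Fin ns) ℂ) ⊗ₖ Z x) Ht := hZH
      exact ((c1.mul_left c3).mul_left c2).eq
    have hM : Eff x * HS - HS * Eff x = 0 := by
      apply eq_zero_of_forall_trace
      intro σ
      have e1 : ((Eff x * HS - HS * Eff x) * σ).trace
          = (Eff x * (HS * σ - σ * HS)).trace := by
        rw [Matrix.sub_mul, Matrix.mul_sub, Matrix.trace_sub, Matrix.trace_sub]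
        congr 1
        · rw [mul_assoc]
        · rw [← mul_assoc, Matrix.trace_mul_cycle (Eff x) σ HS]
      have e2 : (HS * σ - σ * HS) ⊗ₖ gibbs HA β
          = Ht * (σ ⊗ₖ gibbs HA β) - (σ ⊗ₖ gibbs HA β) * Ht := by
        rw [hHt, Matrix.add_mul, Matrix.mul_add, kron_mul, kron_mul, kron_mul, kron_mul]
        simp only [one_mul, mul_one]
        rw [gibbs_comm, sub_kron]
        abel
      rw [e1, hstats (HS * σ - σ * HS) x, e2, hdual, Matrix.mul_sub, Matrix.trace_sub,
        ← mul_assoc, ← mul_assoc, hFH,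
        Matrix.trace_mul_cycle (Ed ((1 : Matrix (Fin ns) (Fin ns) ℂ) ⊗ₖ Z x))
          (σ ⊗ₖ gibbs HA β) Ht, sub_self]
    exact sub_eq_zero.mp hM
  · intro hcom
    refine ⟨ns, HS, hHS, 1, one_pos,
      (fun A => swapM ns * A * swapM ns), (fun A => swapM ns * A * swapM ns), Eff,
      ⟨1, fun _ => swapM ns, fun A => by rw [Fin.sum_univ_one, swap_conjT]⟩,
      fun A => by
        rw [Matrix.trace_mul_comm, ← mul_assoc, swap_swap, one_mul],
      by show swapM ns * 1 * swapM ns = 1; rw [mul_one, swap_swap],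
      ⟨1, fun _ => swapM ns, fun A => by rw [Fin.sum_univ_one, swap_conjT]⟩,
      fun A => by
        rw [Matrix.trace_mul_comm, ← mul_assoc, swap_swap, one_mul],
      by show swapM ns * 1 * swapM ns = 1; rw [mul_one, swap_swap],
      fun A B => by
        rw [← mul_assoc, ← mul_assoc, Matrix.trace_mul_comm, ← mul_assoc, ← mul_assoc],
      by
        show swapM ns * (HS ⊗ₖ 1 + 1 ⊗ₖ HS) * swapM ns = _
        rw [mul_add, add_mul, swap_kron, swap_kron, add_comm],
      hpos, hsum, hcom,
      fun ρ x => by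
        show (Eff x * ρ).trace
          = ((1 ⊗ₖ Eff x) * (swapM ns * (ρ ⊗ₖ gibbs HS 1) * swapM ns)).trace
        rw [swap_kron, kron_mul]
        simp only [one_mul]
        rw [Matrix.trace_kronecker, gibbs_trace_one hns HS hHS.eq 1, one_mul]⟩
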